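/- The cokernel of psi^2 - 1 : F_2[x] -> F_2[x] (with psi^2(a) = a^2) is isomorphic as an F_2-vector space to the subspace of polynomials sum a_i x^i with a_{2i} = 0 for all i > 0; concretely, every polynomial is congruent modulo the image of psi^2 - 1 to a unique polynomial whose coefficient of x^{2i} vanishes for all i > 0. -/
import Mathlib

open Polynomial

private lemma sq_self' : ∀ c : ZMod 2, c ^ 2 = c := by decide

private lemma two_zero' : (2 : Polynomial (ZMod 2)) = 0 := by
  have := CharP.cast_eq_zero (Polynomial (ZMod 2)) 2
  simpa using this

private lemma mono_exists' : ∀ n : ℕ, ∃ q : Polynomial (ZMod 2),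
    (∀ i, 0 < i → q.coeff (2*i) = 0) ∧
    ∃ a : Polynomial (ZMod 2), (X:Polynomial (ZMod 2))^n - q = a^2 - a := by
  intro n
  induction n using Nat.strong_induction_on with
  | _ n ih =>
    rcases Nat.even_or_odd n with ⟨k, hk⟩ | hodd
    · rcases Nat.eq_zero_or_pos k with rfl | hk0
      · refine ⟨X^n, ?_, 0, by ring⟩
        intro i hi
        have hn0 : n = 0 := by omega
        subst hn0
        have h2i : (2*i) ≠ 0 := by omega
        simp [coeff_one, h2i]
      · have hk' : k < n := by omega
        obtain ⟨q, hq, a, ha⟩ := ih k hk'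
        refine ⟨q, hq, X^k + a, ?_⟩
        have hn : n = k * 2 := by omega
        rw [hn, pow_mul]
        linear_combination ha - (X:Polynomial (ZMod 2))^k * a * two_zero'
    · refine ⟨X^n, ?_, 0, by ring⟩
      intro i hi
      obtain ⟨k, hk⟩ := hodd
      have h1 : (2*i) ≠ n := by omega
      have h2 : n ≠ 2*i := by omega
      simp [coeff_X_pow, h1, h2]

private lemma exists_part' (p : Polynomial (ZMod 2)) :
    ∃ q : Polynomial (ZMod 2),
      (∀ i : ℕ, 0 < i → q.coeff (2 * i) = 0) ∧
      ∃ a : Polynomial (ZMod 2), p - q = a ^ 2 - a := by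
  induction p using Polynomial.induction_on' with
  | add f g hf hg =>
    obtain ⟨q1, h1, a1, e1⟩ := hf
    obtain ⟨q2, h2, a2, e2⟩ := hg
    refine ⟨q1 + q2, ?_, a1 + a2, ?_⟩
    · intro i hi; simp [h1 i hi, h2 i hi]
    · linear_combination e1 + e2 - a1 * a2 * two_zero'
  | monomial n c =>
    obtain ⟨q, hq, a, ha⟩ := mono_exists' n
    have hc : c ^ 2 = c := by revert c; decide
    have hCc : (C c) ^ 2 = C c := by rw [← C_pow, hc]
    refine ⟨C c * q, ?_, C c * a, ?_⟩
    · intro i hi; simp [hq i hi]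
    · rw [← C_mul_X_pow_eq_monomial]
      linear_combination C c * ha - a^2 * hCc

private lemma uniq_part' (q1 q2 : Polynomial (ZMod 2))
    (h1 : ∀ i : ℕ, 0 < i → q1.coeff (2 * i) = 0)
    (h2 : ∀ i : ℕ, 0 < i → q2.coeff (2 * i) = 0)
    (b : Polynomial (ZMod 2)) (hb : q1 - q2 = b ^ 2 - b) : q1 = q2 := by
  have hdeg : b.natDegree = 0 := by
    by_contra hm
    have hm' : 0 < b.natDegree := Nat.pos_of_ne_zero hm
    have hb0 : b ≠ 0 := fun h => by simp [h] at hm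
    set m := b.natDegree with hmdef
    have hcoeff : (q1 - q2).coeff (2 * m) = 0 := by
      rw [coeff_sub, h1 m hm', h2 m hm', sub_zero]
    have hpow : (b ^ 2).natDegree = 2 * m := by
      rw [natDegree_pow]
    have hb2 : (b ^ 2).coeff (2 * m) = (b.leadingCoeff) ^ 2 := by
      have h : (b ^ 2).coeff ((b ^ 2).natDegree) = b.leadingCoeff ^ 2 :=
        leadingCoeff_pow b 2
      rw [hpow] at h
      exact h
    have hbsmall : b.coeff (2 * m) = 0 :=
      coeff_eq_zero_of_natDegree_lt (by omega)
    rw [hb, coeff_sub, hb2, hbsmall, sub_zero] at hcoeff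
    have : b.leadingCoeff ≠ 0 := leadingCoeff_ne_zero.mpr hb0
    exact this (by rw [← sq_self' b.leadingCoeff, hcoeff])
  obtain ⟨c, rfl⟩ := natDegree_eq_zero.mp hdeg
  have hc : c ^ 2 = c := sq_self' c
  have : q1 - q2 = 0 := by
    rw [hb, ← C_pow, hc, sub_self]
  exact sub_eq_zero.mp this

/-- Every polynomial over `𝔽₂` is congruent modulo the image of
`ψ² - 1 : a ↦ a² - a` to a unique polynomial whose coefficient of `x^{2i}`
vanishes for all `i > 0`. -/
theorem stmt_2 (p : Polynomial (ZMod 2)) :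
    ∃! q : Polynomial (ZMod 2),
      (∀ i : ℕ, 0 < i → q.coeff (2 * i) = 0) ∧
      ∃ a : Polynomial (ZMod 2), p - q = a ^ 2 - a := by
  obtain ⟨q, hq, a, ha⟩ := exists_part' p
  refine ⟨q, ⟨hq, a, ha⟩, ?_⟩
  rintro y ⟨hy, b, hb⟩
  refine uniq_part' y q hy hq (b - a) ?_
  linear_combination hb - ha + (y - q + a * (b - a)) * two_zero'
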